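/- In the standard model of nonempty binary strings with Quine's membership relation, the string aa codes the empty set: Set(aa) holds and no string y satisfies y ε aa; moreover any set code z with no members equals aa or has a member, and not both (i.e., Set(z) → ((z = aa ∨ ∃y y ε z) ∧ ¬(z = aa ∧ ∃y y ε z))). -/

import Mathlib

def W : Type := {l : List Bool // l ≠ []}

/-- Concatenation of nonempty binary words. -/
def cat (x y : W) : W := ⟨x.1 ++ y.1, fun h => x.2 (List.append_eq_nil_iff.mp h).1⟩

/-- The one-letter word a. -/
def wa : W := ⟨[false], by simp⟩

/-- The one-letter word b. -/
def wb : W := ⟨[true], by simp⟩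

/-- x ⊆_p y : x is a (contiguous) substring of y. -/
def subp (x y : W) : Prop :=
  x = y ∨ (∃ z, cat x z = y) ∨ (∃ z, cat z x = y) ∨ ∃ y₁ y₂, y = cat y₁ (cat x y₂)

/-- x B y : x is a proper prefix of y. -/
def WB (x y : W) : Prop := ∃ z, cat x z = y

/-- x < y (on the standard model, where all words are tractable, this is R). -/
def Wlt (x y : W) : Prop := (x = wa ∧ y ≠ wa) ∨ WB x y

/-- Tally_b(t): every letter of t is b. -/
def TallyB (t : W) : Prop := ∀ l ∈ t.1, l = true

/-- MaxT_b(t, w): t is a b-tally and every b-tally occurring in w occurs in t. -/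
def MaxTB (t w : W) : Prop :=
  TallyB t ∧ ∀ t', TallyB t' → subp t' w → subp t' t

/-- Max⁺T_b(t, w): additionally t itself does not occur in w. -/
def MaxpTB (t w : W) : Prop := MaxTB t w ∧ ¬ subp t w

/-- Pref(u, t): u is a preframe indexed by t. -/
def Pref (u t : W) : Prop :=
  TallyB t ∧ ∃ y, subp y u ∧ cat wa (cat y wa) = u ∧ MaxpTB t u

/-- Firstf(x, t₁, u, t₂): t₁ u t₂ is the first frame in x. -/
def Firstf (x t₁ u t₂ : W) : Prop :=
  Pref u t₁ ∧ TallyB t₂ ∧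
    ((t₁ = t₂ ∧ cat t₁ (cat u t₂) = x) ∨
     (Wlt t₁ t₂ ∧ WB (cat t₁ (cat u (cat t₂ wa))) x))

/-- Lastf(x, t₁, u, t₂): t₁ u t₂ is the last frame in x. -/
def Lastf (x t₁ u t₂ : W) : Prop :=
  Pref u t₁ ∧ TallyB t₂ ∧ t₁ = t₂ ∧
    (cat t₁ (cat u t₂) = x ∨
     ∃ w, cat w (cat wa (cat t₁ (cat u t₂))) = x ∧ MaxpTB t₁ w)

/-- Intf(x, w, t₁, u, t₂): t₁ u t₂ is an intermediate frame in x immediately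
following the initial segment w of x. -/
def Intf (x w t₁ u t₂ : W) : Prop :=
  Pref u t₁ ∧ TallyB t₂ ∧ Wlt t₁ t₂ ∧
    (∃ w₁, cat w (cat wa (cat t₁ (cat u (cat t₂ (cat wa w₁))))) = x) ∧ MaxpTB t₁ w

/-- Fr(x, t₁, u, t₂): u is t₁, t₂-framed in x. -/
def Fr (x t₁ u t₂ : W) : Prop :=
  Firstf x t₁ u t₂ ∨ (∃ w, Intf x w t₁ u t₂) ∨ Lastf x t₁ u t₂

/-- Env(t, x): t envelops x, conditions (a)–(e). -/
def Env (t x : W) : Prop :=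
  MaxTB t x ∧
  (∃ u, subp u x ∧ ∃ t₁ t₂, Firstf x t₁ u t₂) ∧
  (∃ u, subp u x ∧ Lastf x t u t) ∧
  (∀ u, subp u x → ∀ t₁ t₂ t₃ t₄, Fr x t₁ u t₂ → Fr x t₃ u t₄ → t₁ = t₃) ∧
  (∀ u₁ u₂, subp u₁ x → subp u₂ x →
    ∀ t' t₁ t₂, Fr x t' u₁ t₁ → Fr x t' u₂ t₂ → u₁ = u₂)

/-- Set(x): x is a set code. -/
def SetC (x : W) : Prop := x = cat wa wa ∨ ∃ t, subp t x ∧ Env t x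

/-- y ε x : y is a member of the set coded by x. -/
def eps (y x : W) : Prop :=
  ∃ t, subp t x ∧ Env t x ∧
    ∃ u, subp u x ∧ ∃ t₁ t₂, Fr x t₁ u t₂ ∧ u = cat wa (cat y wa)

/-- Null Set Lemma in the standard model: aa is a set code with
no members, and every set code z either equals aa or has a member, but not both. -/

lemma tallyB_true_mem {t : W} (ht : TallyB t) : (true : Bool) ∈ t.1 := by
  obtain ⟨l, hl⟩ := t
  cases l with
  | nil => exact absurd rfl hl
  | cons a l =>
    have := ht a (List.mem_cons_self (a := a) (l := l))
    subst this; exact List.mem_cons_self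

lemma noEnv_aa (t : W) : ¬ Env t (cat wa wa) := by
  rintro ⟨⟨ht, -⟩, -, ⟨u, -, ⟨-, -, -, hcase⟩⟩, -⟩
  have htrue := tallyB_true_mem ht
  rcases hcase with h | ⟨w, h, -⟩
  · have hm : (true : Bool) ∈ (cat t (cat u t)).1 := by
      simp [cat]; tauto
    rw [h] at hm
    simp [cat, wa] at hm
  · have hm : (true : Bool) ∈ (cat w (cat wa (cat t (cat u t)))).1 := by
      simp [cat, wa]; tauto
    rw [h] at hm
    simp [cat, wa] at hm

lemma no_eps_aa (y : W) : ¬ eps y (cat wa wa) := by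
  rintro ⟨t, -, hEnv, -⟩
  exact noEnv_aa t hEnv

theorem stmt_19 :
    SetC (cat wa wa) ∧ (∀ y, ¬ eps y (cat wa wa)) ∧
    (∀ z, SetC z → ((z = cat wa wa ∨ ∃ y, eps y z) ∧
      ¬ (z = cat wa wa ∧ ∃ y, eps y z))) := by
  refine ⟨Or.inl rfl, no_eps_aa, ?_⟩
  intro z hz
  constructor
  · rcases hz with h | ⟨t, ht, hEnv⟩
    · exact Or.inl h
    · right
      obtain ⟨u, hu, hLast⟩ := hEnv.2.2.1
      obtain ⟨⟨-, y, -, hy, -⟩, -⟩ := id hLast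
      exact ⟨y, t, ht, hEnv, u, hu, t, t, Or.inr (Or.inr hLast), hy.symm⟩
  · rintro ⟨rfl, y, hy⟩
    exact no_eps_aa y hy
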